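/- arXiv:2407.18781 — 3 statements merged into one kernel-verified Lean document; each statement's English description precedes it below -/
import Mathlib

section
/- Under Assumption (A), for every δ > 0 the ν-measure of each δ-slice of C is uniformly bounded away from zero: η(δ) := inf{ ν(S_{a,δ}) : a ∈ S^{d−1} } > 0. -/
open MeasureTheory ProbabilityTheory Filter Set
open scoped ENNReal InnerProductSpace Topology

noncomputable section

abbrev Ed (d : ℕ) : Type := EuclideanSpace ℝ (Fin d)

section Defs

variable {E : Type*} [NormedAddCommGroup E] [InnerProductSpace ℝ E] [CompleteSpace E]
  [MeasurableSpace E] [BorelSpace E] [SecondCountableTopology E]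
variable {Ω : Type*} [MeasurableSpace Ω]

/-- The (topological) support of a measure. -/
def msupport (ρ : Measure E) : Set E :=
  {x | ∀ U : Set E, IsOpen U → x ∈ U → 0 < ρ U}

/-- `ρ` has a finite second moment, i.e. `ρ ∈ 𝒫₂`. -/
def FiniteSecondMoment (ρ : Measure E) : Prop :=
  ∫⁻ x, (‖x‖₊ : ℝ≥0∞) ^ 2 ∂ρ < ⊤

/-- `ρ` has a finite first moment, i.e. `ρ ∈ 𝒫₁`. -/
def FiniteFirstMoment (ρ : Measure E) : Prop :=
  ∫⁻ x, (‖x‖₊ : ℝ≥0∞) ∂ρ < ⊤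

/-- Convex order `μ ≤_cx ν`: `∫ φ dμ ≤ ∫ φ dν` for all (integrable) convex `φ`. -/
def ConvexOrder (μ ν : Measure E) : Prop :=
  ∀ φ : E → ℝ, ConvexOn ℝ Set.univ φ → Integrable φ μ → Integrable φ ν →
    ∫ x, φ x ∂μ ≤ ∫ x, φ x ∂ν

/-- There is a martingale `(M_t)_{0 ≤ t ≤ 1}` with `M_0 ∼ μ`, `M_1 ∼ ν` and
`P(M_0 ∈ A, M_1 ∈ B) > 0`. -/
def ExistsMartingaleHitting (μ ν : Measure E) (A B : Set E) : Prop :=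
  ∃ (Ω' : Type) (mΩ' : MeasurableSpace Ω'),
    letI : MeasurableSpace Ω' := mΩ'
    ∃ (P' : Measure Ω') (ℱ : Filtration ℝ mΩ') (M : ℝ → Ω' → E),
      IsProbabilityMeasure P' ∧ Martingale M ℱ P' ∧
      P'.map (M 0) = μ ∧ P'.map (M 1) = ν ∧
      0 < P' {ω | M 0 ω ∈ A ∧ M 1 ω ∈ B}

/-- The pair `(μ, ν)` is irreducible. -/
def IrreduciblePair (μ ν : Measure E) : Prop :=
  ∀ A B : Set E, MeasurableSet A → MeasurableSet B → 0 < μ A → 0 < ν B →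
    ExistsMartingaleHitting μ ν A B

/-- Assumption (A): convex order, irreducibility, `C := conv(supp ν)` compact,
and `supp μ` contained in the interior of `C`. -/
structure AssumptionA (μ ν : Measure E) : Prop where
  cx : ConvexOrder μ ν
  irr : IrreduciblePair μ ν
  cptC : IsCompact (convexHull ℝ (msupport ν))
  suppInt : msupport μ ⊆ interior (convexHull ℝ (msupport ν))

/-- Maximal covariance `MCov(p₁, p₂) = sup_{q ∈ Cpl(p₁,p₂)} ∫ ⟨x₁, x₂⟩ q(dx₁,dx₂)`. -/
def MCov (p₁ p₂ : Measure E) : ℝ :=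
  ⨆ q : {q : Measure (E × E) // q.map Prod.fst = p₁ ∧ q.map Prod.snd = p₂},
    ∫ x : E × E, ⟪x.1, x.2⟫_ℝ ∂(q.1)

/-- Convolution of the measure `α` with the measure `γ`. -/
def mconvol (α γ : Measure E) : Measure E :=
  (α.prod γ).map fun p => p.1 + p.2

/-- The Bass functional `𝒱(α) = MCov(α ∗ γ, ν) − MCov(α, μ)`. -/
def calV (γ μ ν : Measure E) (α : Measure E) : ℝ :=
  MCov (mconvol α γ) ν - MCov α μ

/-- The sigma-algebra generated by a random variable. -/
def sigmaGen {F : Type*} [MeasurableSpace F] (X : Ω → F) : MeasurableSpace Ω :=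
  MeasurableSpace.comap X inferInstance

/-- `Z ∈ L²(m)`: `m`-measurable and square-integrable. -/
def MemL2Meas {Ω' : Type*} {mΩ' : MeasurableSpace Ω'} (P : @Measure Ω' mΩ')
    (m : MeasurableSpace Ω') (Z : Ω' → E) : Prop :=
  Measurable[m] Z ∧ MemLp Z 2 P

/-- The lifted Bass functional `V(Z) = sup { E[(Z+Γ)·Y − Z·X] : Y ∈ L²(ℋ), Y ∼ ν }`,
where `ℋ = σ(X, Γ)`. -/
def bassV (P : Measure Ω) (ν : Measure E) (X Γ : Ω → E) (Z : Ω → E) : ℝ :=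
  ⨆ Y : {Y : Ω → E // Measurable[sigmaGen X ⊔ sigmaGen Γ] Y ∧ MemLp Y 2 P ∧ P.map Y = ν},
    ∫ ω, (⟪Z ω + Γ ω, Y.1 ω⟫_ℝ - ⟪Z ω, X ω⟫_ℝ) ∂P

/-- `T` is the Brenier map from `ρ` to `η`: an a.e. gradient of a convex function pushing
`ρ` forward to `η`. -/
def IsBrenierMap (ρ η : Measure E) (T : E → E) : Prop :=
  Measurable T ∧ ρ.map T = η ∧
    ∃ v : E → ℝ, ConvexOn ℝ Set.univ v ∧ ∀ᵐ x ∂ρ, HasGradientAt v (T x) x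

/-- Convolution `(f ∗ γ)(z) = ∫ f (z + y) γ(dy)` of a map with a measure. -/
def gconv (γ : Measure E) (f : E → E) (z : E) : E :=
  ∫ y, f (z + y) ∂γ

/-- The standing probabilistic setup: `P` a probability measure carrying independent
random variables `X ∼ μ` and `Γ ∼ γ`, with `μ, ν ∈ 𝒫₂`. -/
structure BassSetup (P : Measure Ω) (γ μ ν : Measure E) (X Γ : Ω → E) : Prop where
  prob : IsProbabilityMeasure P
  probν : IsProbabilityMeasure ν
  fin2ν : FiniteSecondMoment ν
  measX : Measurable X
  measΓ : Measurable Γ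
  indep : IndepFun X Γ P
  lawX : P.map X = μ
  lawΓ : P.map Γ = γ
  l2X : MemLp X 2 P

/-- `(X, Z)` is coupled monotonically: `E[⟨X, Z⟩] = MCov(law X, law Z)`. -/
def MonotoneCoupled (P : Measure Ω) (X Z : Ω → E) : Prop :=
  ∫ ω, ⟪X ω, Z ω⟫_ℝ ∂P = MCov (P.map X) (P.map Z)

/-- The `L²`-Bass gradient flow: an absolutely continuous curve `(ζ_t)_{t ≥ 0}` of
`σ(X)`-measurable elements of `L²` satisfying, for a.e. `t ≥ 0`,
`dζ_t/dt = −((∇v_t ∗ γ)(ζ_t) − X)`, where `∇v_t` is the Brenier map from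
`law(ζ_t) ∗ γ = law(ζ_t + Γ)` to `ν`. -/
def IsBassGradientFlow (P : Measure Ω) (γ ν : Measure E) (X Γ : Ω → E)
    (ζ : ℝ → Lp E 2 P) : Prop :=
  (∀ t : ℝ, 0 ≤ t → AEStronglyMeasurable[sigmaGen X] (ζ t : Ω → E) P) ∧
  ∃ g : ℝ → Lp E 2 P,
    (∀ t : ℝ, 0 ≤ t → ζ t = ζ 0 + ∫ s in (0:ℝ)..t, g s) ∧
    ∀ᵐ t ∂(volume.restrict (Set.Ioi (0:ℝ))),
      ∃ T : E → E,
        IsBrenierMap (P.map fun ω => (ζ t : Ω → E) ω + Γ ω) ν T ∧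
        (g t : Ω → E) =ᵐ[P] fun ω => X ω - gconv γ T ((ζ t : Ω → E) ω)

/-- `Z` minimizes the lifted Bass functional over `L²(σ(X))`. -/
def IsMinimizerV (P : Measure Ω) (ν : Measure E) (X Γ : Ω → E) (Z : Ω → E) : Prop :=
  ∀ W : Ω → E, MemL2Meas P (sigmaGen X) W → bassV P ν X Γ Z ≤ bassV P ν X Γ W

/-- The support function `ℓ(a) = sup { ⟨y, a⟩ : y ∈ C }` of a set `C`. -/
def suppFn (C : Set E) (a : E) : ℝ := sSup ((fun y => ⟪y, a⟫_ℝ) '' C)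

/-- The `δ`-slice `S_{a,δ} = { y ∈ C : ⟨y, a⟩ > ℓ(a) − δ }`. -/
def mslice (C : Set E) (a : E) (δ : ℝ) : Set E :=
  {y ∈ C | suppFn C a - δ < ⟪y, a⟫_ℝ}

/-- `Δ = inf { ℓ(a) − ⟨x, a⟩ : a ∈ S^{d−1}, x ∈ C_μ }`. -/
def bassDelta (μ ν : Measure E) : ℝ :=
  sInf {r : ℝ | ∃ a : E, ‖a‖ = 1 ∧ ∃ x ∈ convexHull ℝ (msupport μ),
    r = suppFn (convexHull ℝ (msupport ν)) a - ⟪x, a⟫_ℝ}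

/-- A tight family of measures. -/
def TightFamily (Λ : Set (Measure E)) : Prop :=
  ∀ ε : ℝ≥0∞, 0 < ε → ∃ K : Set E, IsCompact K ∧ ∀ β ∈ Λ, β Kᶜ ≤ ε

end Defs

/-- The standard Gaussian measure on `ℝ^d`. -/
def stdGaussian (d : ℕ) : Measure (Ed d) :=
  (Measure.pi fun _ : Fin d => gaussianReal 0 1).map
    (MeasurableEquiv.toLp 2 (Fin d → ℝ))

/-- Assumptions (A4)-(A5): `ν` is absolutely continuous with a density which is essentially
bounded away from `0` on `I = int C` and essentially bounded from above on `ℝ`. -/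
def NuDensityBounds (ν : Measure ℝ) : Prop :=
  ∃ f : ℝ → ℝ, Measurable f ∧ ν = volume.withDensity (fun x => ENNReal.ofReal (f x)) ∧
    (∃ c : ℝ, 0 < c ∧ ∀ᵐ x ∂(volume : Measure ℝ),
        x ∈ interior (convexHull ℝ (msupport ν)) → c ≤ f x) ∧
    (∃ Cb : ℝ, ∀ᵐ x ∂(volume : Measure ℝ), f x ≤ Cb)

section Aux
set_option linter.unusedSectionVars false

variable {E : Type*} [NormedAddCommGroup E] [InnerProductSpace ℝ E] [CompleteSpace E]
  [MeasurableSpace E] [BorelSpace E] [SecondCountableTopology E]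

lemma msupport_compl_null (ρ : Measure E) : ρ (msupport ρ)ᶜ = 0 := by
  obtain ⟨T, hTc, hTsub, hTeq⟩ :=
    TopologicalSpace.isOpen_sUnion_countable {U : Set E | IsOpen U ∧ ρ U = 0}
      (fun s hs => hs.1)
  have hsub : (msupport ρ)ᶜ ⊆ ⋃₀ T := by
    rw [hTeq]
    intro x hx
    simp only [msupport, Set.mem_compl_iff, Set.mem_setOf_eq, not_forall] at hx
    obtain ⟨U, hU, hxU, hρ⟩ := hx
    exact ⟨U, ⟨hU, by simpa [pos_iff_ne_zero, not_not] using hρ⟩, hxU⟩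
  have hz : ρ (⋃₀ T) = 0 :=
    (measure_sUnion_null_iff hTc).2 fun s hs => (hTsub hs).2
  exact le_antisymm (le_trans (measure_mono hsub) hz.le) (by simp)

lemma le_suppFn {C : Set E} (hC : IsCompact C) {a y : E} (hy : y ∈ C) :
    ⟪y, a⟫_ℝ ≤ suppFn C a := by
  refine le_csSup ?_ ⟨y, hy, rfl⟩
  exact ((hC.image (by continuity)).bddAbove)

lemma exists_suppFn_eq {C : Set E} (hC : IsCompact C) (hne : C.Nonempty) (a : E) :
    ∃ y ∈ C, suppFn C a = ⟪y, a⟫_ℝ := by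
  have hcont : Continuous fun y : E => ⟪y, a⟫_ℝ := by continuity
  obtain ⟨y, hy, hmax⟩ := hC.exists_isMaxOn hne hcont.continuousOn
  refine ⟨y, hy, le_antisymm ?_ (le_suppFn hC hy)⟩
  exact csSup_le (hne.image _) (by rintro r ⟨z, hz, rfl⟩; exact hmax hz)

lemma suppFn_lip {C : Set E} (hC : IsCompact C) (hne : C.Nonempty) {R : ℝ}
    (hR : ∀ y ∈ C, ‖y‖ ≤ R) (a b : E) :
    suppFn C a ≤ suppFn C b + R * ‖a - b‖ := by
  obtain ⟨y, hy, hEq⟩ := exists_suppFn_eq hC hne a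
  have h1 : ⟪y, a⟫_ℝ - ⟪y, b⟫_ℝ = ⟪y, a - b⟫_ℝ := (inner_sub_right y a b).symm
  have h2 : ⟪y, a - b⟫_ℝ ≤ ‖y‖ * ‖a - b‖ := real_inner_le_norm _ _
  have h3 : ‖y‖ * ‖a - b‖ ≤ R * ‖a - b‖ :=
    mul_le_mul_of_nonneg_right (hR y hy) (norm_nonneg _)
  have h4 : ⟪y, b⟫_ℝ ≤ suppFn C b := le_suppFn hC hy
  linarith [hEq]

/-- There are points of the support nearly attaining the support function of the hull. -/
lemma exists_msupport_near (ν : Measure E)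
    (hC : IsCompact (convexHull ℝ (msupport ν)))
    (hne : (convexHull ℝ (msupport ν)).Nonempty) (a : E) {ε : ℝ} (hε : 0 < ε) :
    ∃ y ∈ msupport ν, suppFn (convexHull ℝ (msupport ν)) a - ε < ⟪y, a⟫_ℝ := by
  set C := convexHull ℝ (msupport ν)
  by_contra h
  push_neg at h
  have hsub : msupport ν ⊆ {w | ⟪w, a⟫_ℝ ≤ suppFn C a - ε} := fun y hy => h y hy
  have hconv : Convex ℝ {w : E | ⟪w, a⟫_ℝ ≤ suppFn C a - ε} := by
    refine convex_halfSpace_le ?_ _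
    exact ⟨fun x y => inner_add_left x y a, fun c x => real_inner_smul_left x a c⟩
  have hCsub : C ⊆ {w | ⟪w, a⟫_ℝ ≤ suppFn C a - ε} := convexHull_min hsub hconv
  obtain ⟨y, hy, hEq⟩ := exists_suppFn_eq hC hne a
  have := hCsub hy
  simp only [Set.mem_setOf_eq] at this
  linarith

lemma slice_pos (ν : Measure E)
    (hC : IsCompact (convexHull ℝ (msupport ν)))
    (hne : (convexHull ℝ (msupport ν)).Nonempty) {a : E} (ha : ‖a‖ = 1)
    {δ : ℝ} (hδ : 0 < δ) :
    0 < ν (mslice (convexHull ℝ (msupport ν)) a δ) := by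
  set C := convexHull ℝ (msupport ν) with hCdef
  obtain ⟨y₀, hy₀, hnear⟩ := exists_msupport_near ν hC hne a (half_pos hδ)
  have hball : Metric.ball y₀ (δ / 2) ∩ msupport ν ⊆ mslice C a δ := by
    rintro y ⟨hyb, hys⟩
    refine ⟨subset_convexHull ℝ _ hys, ?_⟩
    have h1 : ⟪y, a⟫_ℝ - ⟪y₀, a⟫_ℝ = ⟪y - y₀, a⟫_ℝ := (inner_sub_left y y₀ a).symm
    have h2 : ⟪y₀ - y, a⟫_ℝ ≤ ‖y₀ - y‖ * ‖a‖ := real_inner_le_norm _ _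
    have h2' : ⟪y₀ - y, a⟫_ℝ = -(⟪y - y₀, a⟫_ℝ) := by
      rw [← inner_neg_left]; congr 1; abel
    have h3 : ‖y₀ - y‖ < δ / 2 := by
      rw [← dist_eq_norm]; rw [Metric.mem_ball, dist_comm] at hyb; exact hyb
    have : -(⟪y - y₀, a⟫_ℝ) ≤ ‖y₀ - y‖ * ‖a‖ := h2' ▸ h2
    rw [ha, mul_one] at this
    show suppFn C a - δ < ⟪y, a⟫_ℝ
    linarith
  have hb : 0 < ν (Metric.ball y₀ (δ / 2)) :=
    hy₀ _ Metric.isOpen_ball (Metric.mem_ball_self (half_pos hδ))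
  have hcap : ν (Metric.ball y₀ (δ / 2)) ≤ ν (Metric.ball y₀ (δ / 2) ∩ msupport ν) := by
    calc ν (Metric.ball y₀ (δ / 2))
        ≤ ν ((Metric.ball y₀ (δ / 2) ∩ msupport ν) ∪ (msupport ν)ᶜ) := by
          refine measure_mono ?_
          intro x hx
          by_cases hxs : x ∈ msupport ν
          · exact Or.inl ⟨hx, hxs⟩
          · exact Or.inr hxs
      _ ≤ ν (Metric.ball y₀ (δ / 2) ∩ msupport ν) + ν (msupport ν)ᶜ := measure_union_le _ _
      _ = ν (Metric.ball y₀ (δ / 2) ∩ msupport ν) := by rw [msupport_compl_null, add_zero]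
  exact lt_of_lt_of_le hb (le_trans hcap (measure_mono hball))

end Aux

/-- Lemma 3.5 (iii) / `lem:S` (iii). Under Assumption (A), for every
`δ > 0` the `ν`-measure of each `δ`-slice of `C` is uniformly bounded away from zero:
`η(δ) = inf { ν(S_{a,δ}) : a ∈ S^{d−1} } > 0`. -/
theorem statement11
    {d : ℕ} {μ ν : Measure (Ed d)}
    [IsProbabilityMeasure μ] [IsProbabilityMeasure ν]
    (hspan : affineSpan ℝ (convexHull ℝ (msupport ν)) = ⊤)
    (hA : AssumptionA μ ν) :
    ∀ δ : ℝ, 0 < δ → ∃ c : ℝ, 0 < c ∧ ∀ a : Ed d, ‖a‖ = 1 →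
      ENNReal.ofReal c ≤ ν (mslice (convexHull ℝ (msupport ν)) a δ) := by
  intro δ hδ
  set C := convexHull ℝ (msupport ν) with hCdef
  have hC : IsCompact C := hA.cptC
  have hsne : (msupport ν).Nonempty := by
    rw [Set.nonempty_iff_ne_empty]
    intro h
    rw [hCdef, h, convexHull_empty, AffineSubspace.span_empty] at hspan
    exact bot_ne_top hspan
  have hneC : C.Nonempty := by
    rw [hCdef, convexHull_nonempty_iff]
    exact hsne
  obtain ⟨y0, hy0, hmax⟩ := hC.exists_isMaxOn hneC continuous_norm.continuousOn
  set R := ‖y0‖ with hRdef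
  have hR : ∀ y ∈ C, ‖y‖ ≤ R := fun y hy => hmax hy
  have hR0 : 0 ≤ R := norm_nonneg _
  set ε := δ / (4 * R + 4) with hεdef
  have hε : 0 < ε := div_pos hδ (by linarith)
  by_cases hsp : ∃ a : Ed d, ‖a‖ = 1
  · have hcpt : IsCompact (Metric.sphere (0 : Ed d) 1) := isCompact_sphere 0 1
    obtain ⟨t, htsub, htcov⟩ := hcpt.elim_nhds_subcover (fun b => Metric.ball b ε)
      (fun b _ => Metric.ball_mem_nhds b hε)
    have htne : t.Nonempty := by
      obtain ⟨a, ha⟩ := hsp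
      have hamem : a ∈ Metric.sphere (0 : Ed d) 1 := by
        rwa [mem_sphere_zero_iff_norm]
      have := htcov hamem
      simp only [Set.mem_iUnion] at this
      obtain ⟨b, hb, _⟩ := this
      exact ⟨b, hb⟩
    set m := t.inf' htne (fun b => ν (mslice C b (δ / 2))) with hmdef
    have hm0 : 0 < m := by
      rw [hmdef, Finset.lt_inf'_iff]
      intro b hb
      have hbn : ‖b‖ = 1 := by
        have := htsub b hb
        rwa [mem_sphere_zero_iff_norm] at this
      exact slice_pos ν hC hneC hbn (half_pos hδ)
    have hmtop : m ≠ ⊤ := by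
      obtain ⟨b0, hb0⟩ := htne
      have h1 : m ≤ ν (mslice C b0 (δ / 2)) := Finset.inf'_le _ hb0
      exact (lt_of_le_of_lt h1 (measure_lt_top ν _)).ne
    refine ⟨m.toReal, ENNReal.toReal_pos hm0.ne' hmtop, fun a ha => ?_⟩
    have hamem : a ∈ Metric.sphere (0 : Ed d) 1 := by rwa [mem_sphere_zero_iff_norm]
    have := htcov hamem
    simp only [Set.mem_iUnion] at this
    obtain ⟨b, hb, hba⟩ := this
    have hbn : ‖b‖ = 1 := by
      have := htsub b hb
      rwa [mem_sphere_zero_iff_norm] at this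
    have hab : ‖a - b‖ < ε := by
      rw [← dist_eq_norm]
      exact Metric.mem_ball.mp hba
    have hRab : R * ‖a - b‖ ≤ δ / 4 := by
      have h1 : R * ‖a - b‖ ≤ R * ε := mul_le_mul_of_nonneg_left hab.le hR0
      have h2 : R * ε ≤ δ / 4 := by
        rw [hεdef, mul_div_assoc'] -- (R * δ) / (4R+4)
        rw [div_le_div_iff₀ (by linarith) (by norm_num)]
        nlinarith
      linarith
    have hinc : mslice C b (δ / 2) ⊆ mslice C a δ := by
      rintro y ⟨hyC, hy⟩
      refine ⟨hyC, ?_⟩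
      show suppFn C a - δ < ⟪y, a⟫_ℝ
      have hy' : suppFn C b - δ / 2 < ⟪y, b⟫_ℝ := hy
      have hL : suppFn C a ≤ suppFn C b + R * ‖a - b‖ := suppFn_lip hC hneC hR a b
      have h5 : ⟪y, b - a⟫_ℝ = ⟪y, b⟫_ℝ - ⟪y, a⟫_ℝ := inner_sub_right _ _ _
      have h6 : ⟪y, b - a⟫_ℝ ≤ ‖y‖ * ‖b - a‖ := real_inner_le_norm _ _
      have h7 : ‖y‖ * ‖b - a‖ ≤ R * ‖a - b‖ := by
        rw [norm_sub_rev b a]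
        exact mul_le_mul_of_nonneg_right (hR y hyC) (norm_nonneg _)
      linarith
    calc ENNReal.ofReal m.toReal = m := ENNReal.ofReal_toReal hmtop
      _ ≤ ν (mslice C b (δ / 2)) := Finset.inf'_le _ hb
      _ ≤ ν (mslice C a δ) := measure_mono hinc
  · exact ⟨1, one_pos, fun a ha => absurd ⟨a, ha⟩ hsp⟩

end
end

section
/- Let d = 1, let Z be 𝒢-measurable and ΔZ ∈ L¹(𝒢;ℝ). Then for γ₁-a.e. ζ, the conditional expectation satisfies E[ΔZ | Z + Γ = ζ] = E[φ₁(ζ − Z) ΔZ] / E[φ₁(ζ − Z)], where φ₁ is the standard Gaussian density. -/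
open MeasureTheory ProbabilityTheory Filter Set
open scoped ENNReal InnerProductSpace Topology

noncomputable section

private lemma phi_shift (z : ℝ) :
    (fun t : ℝ => gaussianPDFReal 0 1 (t - z)) = gaussianPDFReal z 1 := by
  funext t
  rw [gaussianPDFReal_sub, zero_add]

private lemma phi_bound (x : ℝ) : gaussianPDFReal 0 1 x ≤ (Real.sqrt (2 * Real.pi))⁻¹ := by
  rw [gaussianPDFReal]
  push_cast
  have h1 : Real.exp (-(x - 0) ^ 2 / (2 * 1)) ≤ 1 := by
    rw [Real.exp_le_one_iff]
    nlinarith [sq_nonneg (x - 0)]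
  have h2 : (0:ℝ) < Real.sqrt (2 * Real.pi) := Real.sqrt_pos.mpr (by positivity)
  calc (Real.sqrt (2 * Real.pi * 1))⁻¹ * Real.exp (-(x - 0) ^ 2 / (2 * 1))
      ≤ (Real.sqrt (2 * Real.pi * 1))⁻¹ * 1 := by
        apply mul_le_mul_of_nonneg_left h1 (by positivity)
    _ = (Real.sqrt (2 * Real.pi))⁻¹ := by rw [mul_one, mul_one]

private lemma phi_int {ρ : Measure (ℝ × ℝ)} [IsProbabilityMeasure ρ] (ζ : ℝ) :
    Integrable (fun zw : ℝ × ℝ => gaussianPDFReal 0 1 (ζ - zw.1)) ρ := by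
  refine (integrable_const ((Real.sqrt (2 * Real.pi))⁻¹)).mono' ?_ ?_
  · exact ((measurable_gaussianPDFReal 0 1).comp (measurable_const.sub measurable_fst)).aestronglyMeasurable
  · refine ae_of_all _ fun zw => ?_
    rw [Real.norm_eq_abs, abs_of_nonneg (gaussianPDFReal_nonneg _ _ _)]
    exact phi_bound _

private lemma phi_int_pos {ρ : Measure (ℝ × ℝ)} [IsProbabilityMeasure ρ] (ζ : ℝ) :
    0 < ∫ zw : ℝ × ℝ, gaussianPDFReal 0 1 (ζ - zw.1) ∂ρ := by
  rw [integral_pos_iff_support_of_nonneg (fun zw => gaussianPDFReal_nonneg _ _ _) (phi_int ζ)]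
  have : Function.support (fun zw : ℝ × ℝ => gaussianPDFReal 0 1 (ζ - zw.1)) = univ := by
    ext zw; simp [Function.mem_support, (gaussianPDFReal_pos 0 1 (ζ - zw.1) one_ne_zero).ne']
  rw [this]
  simp

private lemma law_add {ρ : Measure (ℝ × ℝ)} [IsProbabilityMeasure ρ]
    (p : ℝ → ℝ) (hpdef : p = fun ζ => ∫ zw : ℝ × ℝ, gaussianPDFReal 0 1 (ζ - zw.1) ∂ρ)
    (hint : ∀ ζ : ℝ, Integrable (fun zw : ℝ × ℝ => gaussianPDFReal 0 1 (ζ - zw.1)) ρ) :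
    (ρ.prod (gaussianReal 0 1)).map (fun x : (ℝ × ℝ) × ℝ => x.1.1 + x.2)
      = volume.withDensity (fun ζ => ENNReal.ofReal (p ζ)) := by
  have haddm : Measurable (fun x : (ℝ × ℝ) × ℝ => x.1.1 + x.2) :=
    measurable_fst.fst.add measurable_snd
  have hdens : gaussianReal 0 1 = volume.withDensity (gaussianPDF 0 1) :=
    gaussianReal_of_var_ne_zero 0 one_ne_zero
  ext A hA
  rw [Measure.map_apply haddm hA, withDensity_apply _ hA,
    Measure.prod_apply (haddm hA)]
  have key : ∀ zw : ℝ × ℝ,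
      (gaussianReal 0 1) (Prod.mk zw ⁻¹' ((fun x : (ℝ × ℝ) × ℝ => x.1.1 + x.2) ⁻¹' A))
      = ∫⁻ ζ, A.indicator (fun _ => (1:ℝ≥0∞)) ζ * gaussianPDF 0 1 (ζ - zw.1) ∂volume := by
    intro zw
    have hpre : Prod.mk zw ⁻¹' ((fun x : (ℝ × ℝ) × ℝ => x.1.1 + x.2) ⁻¹' A)
        = {g : ℝ | zw.1 + g ∈ A} := rfl
    have hms : MeasurableSet {g : ℝ | zw.1 + g ∈ A} := (measurable_const_add zw.1) hA
    rw [hpre, hdens, withDensity_apply _ hms, ← lintegral_indicator hms]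
    have heq : ∀ g : ℝ, ({g : ℝ | zw.1 + g ∈ A}).indicator (gaussianPDF 0 1) g
        = (fun t => A.indicator (fun _ => (1:ℝ≥0∞)) t * gaussianPDF 0 1 (t - zw.1)) (zw.1 + g) := by
      intro g
      by_cases hg : zw.1 + g ∈ A <;>
        simp [Set.indicator_apply, hg, add_sub_cancel_left]
    rw [funext heq, lintegral_add_left_eq_self
      (fun t => A.indicator (fun _ => (1:ℝ≥0∞)) t * gaussianPDF 0 1 (t - zw.1)) zw.1]
  simp_rw [key]
  rw [lintegral_lintegral_swap]
  · have inner : ∀ ζ : ℝ, ∫⁻ zw : ℝ × ℝ, A.indicator (fun _ => (1:ℝ≥0∞)) ζ * gaussianPDF 0 1 (ζ - zw.1) ∂ρ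
        = A.indicator (fun t => ENNReal.ofReal (p t)) ζ := by
      intro ζ
      rw [lintegral_const_mul' _ _ (by by_cases hζ : ζ ∈ A <;> simp [Set.indicator_apply, hζ])]
      have : ∫⁻ zw : ℝ × ℝ, gaussianPDF 0 1 (ζ - zw.1) ∂ρ = ENNReal.ofReal (p ζ) := by
        rw [hpdef]
        simp only [gaussianPDF]
        exact (ofReal_integral_eq_lintegral_ofReal (hint ζ)
          (ae_of_all _ fun zw => gaussianPDFReal_nonneg _ _ _)).symm
      rw [this]
      by_cases hζ : ζ ∈ A <;> simp [Set.indicator_apply, hζ]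
    simp_rw [inner]
    rw [lintegral_indicator hA]
  · apply Measurable.aemeasurable
    apply Measurable.mul
    · exact (measurable_one.indicator hA).comp measurable_snd
    · exact (measurable_gaussianPDF 0 1).comp (measurable_snd.sub measurable_fst.fst)




-- big integrability on ρ.prod volume
private lemma big_int {ρ : Measure (ℝ × ℝ)} [IsProbabilityMeasure ρ]
    (hw : Integrable (fun zw : ℝ × ℝ => zw.2) ρ) :
    Integrable (fun x : (ℝ × ℝ) × ℝ => gaussianPDFReal 0 1 (x.2 - x.1.1) * x.1.2)
      (ρ.prod volume) := by
  have hmeas : Measurable (fun x : (ℝ × ℝ) × ℝ => gaussianPDFReal 0 1 (x.2 - x.1.1) * x.1.2) :=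
    ((measurable_gaussianPDFReal 0 1).comp (measurable_snd.sub measurable_fst.fst)).mul
      measurable_fst.snd
  rw [integrable_prod_iff hmeas.aestronglyMeasurable]
  constructor
  · refine ae_of_all _ fun zw => ?_
    have := (integrable_gaussianPDFReal zw.1 1).mul_const zw.2
    rw [← phi_shift zw.1] at this
    exact this
  · refine hw.norm.congr (ae_of_all _ fun zw => ?_)
    have : ∀ t : ℝ, ‖gaussianPDFReal 0 1 (t - zw.1) * zw.2‖
        = gaussianPDFReal 0 1 (t - zw.1) * ‖zw.2‖ := by
      intro t
      rw [norm_mul, Real.norm_eq_abs (gaussianPDFReal 0 1 (t - zw.1)),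
        abs_of_nonneg (gaussianPDFReal_nonneg _ _ _)]
    simp_rw [this]
    rw [integral_mul_const, phi_shift zw.1, integral_gaussianPDFReal_eq_one zw.1 one_ne_zero,
      one_mul]

private lemma rhs_calc {ρ : Measure (ℝ × ℝ)} [IsProbabilityMeasure ρ]
    (hw : Integrable (fun zw : ℝ × ℝ => zw.2) ρ)
    (q : ℝ → ℝ) (hqdef : q = fun ζ => ∫ zw : ℝ × ℝ, gaussianPDFReal 0 1 (ζ - zw.1) * zw.2 ∂ρ)
    (A : Set ℝ) (hA : MeasurableSet A) :
    ∫ x : (ℝ × ℝ) × ℝ, A.indicator (fun _ => (1:ℝ)) (x.1.1 + x.2) * x.1.2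
        ∂(ρ.prod (gaussianReal 0 1))
      = ∫ t in A, q t ∂volume := by
  have hdens : gaussianReal 0 1 = volume.withDensity (gaussianPDF 0 1) :=
    gaussianReal_of_var_ne_zero 0 one_ne_zero
  have hGm : Measurable (fun x : (ℝ × ℝ) × ℝ => A.indicator (fun _ => (1:ℝ)) (x.1.1 + x.2) * x.1.2) :=
    ((measurable_one.indicator hA).comp (measurable_fst.fst.add measurable_snd)).mul
      measurable_fst.snd
  have hwprod : Integrable (fun x : (ℝ × ℝ) × ℝ => x.1.2) (ρ.prod (gaussianReal 0 1)) := by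
    have h1 : Integrable (fun zw : ℝ × ℝ => zw.2) ((ρ.prod (gaussianReal 0 1)).map Prod.fst) := by
      rw [Measure.map_fst_prod]
      simpa using hw
    exact (integrable_map_measure measurable_snd.aestronglyMeasurable
      measurable_fst.aemeasurable).mp h1
  have hGint : Integrable (fun x : (ℝ × ℝ) × ℝ => A.indicator (fun _ => (1:ℝ)) (x.1.1 + x.2) * x.1.2)
      (ρ.prod (gaussianReal 0 1)) := by
    refine hwprod.norm.mono' hGm.aestronglyMeasurable (ae_of_all _ fun x => ?_)
    rw [norm_mul]
    have h1 : ‖A.indicator (fun _ => (1:ℝ)) (x.1.1 + x.2)‖ ≤ 1 := by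
      by_cases hx : x.1.1 + x.2 ∈ A <;> simp [Set.indicator_apply, hx]
    have := mul_le_of_le_one_left (norm_nonneg x.1.2) h1
    simpa using this
  rw [integral_prod _ hGint]
  -- inner integral over gaussian
  have hinner : ∀ zw : ℝ × ℝ,
      ∫ g : ℝ, A.indicator (fun _ => (1:ℝ)) (zw.1 + g) * zw.2 ∂(gaussianReal 0 1)
      = ∫ t : ℝ, A.indicator (fun _ => (1:ℝ)) t * gaussianPDFReal 0 1 (t - zw.1) * zw.2 ∂volume := by
    intro zw
    have hnn : gaussianPDF 0 1 = fun x => ((gaussianPDFReal 0 1 x).toNNReal : ℝ≥0∞) := rfl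
    rw [hdens, hnn, integral_withDensity_eq_integral_smul
      ((measurable_gaussianPDFReal 0 1).real_toNNReal) _]
    have heq : ∀ g : ℝ, (gaussianPDFReal 0 1 g).toNNReal • (A.indicator (fun _ => (1:ℝ)) (zw.1 + g) * zw.2)
        = (fun t => A.indicator (fun _ => (1:ℝ)) t * gaussianPDFReal 0 1 (t - zw.1) * zw.2) (zw.1 + g) := by
      intro g
      rw [NNReal.smul_def, smul_eq_mul, Real.coe_toNNReal _ (gaussianPDFReal_nonneg _ _ _)]
      simp only [add_sub_cancel_left]
      ring
    rw [funext heq, integral_add_left_eq_self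
      (fun t => A.indicator (fun _ => (1:ℝ)) t * gaussianPDFReal 0 1 (t - zw.1) * zw.2) zw.1]
  show (∫ zw : ℝ × ℝ, ∫ g : ℝ, A.indicator (fun _ => (1:ℝ)) (zw.1 + g) * zw.2
      ∂(gaussianReal 0 1) ∂ρ) = _
  rw [integral_congr_ae (ae_of_all _ fun zw => hinner zw)]
  -- swap integrals
  have hum : Measurable (Function.uncurry fun (zw : ℝ × ℝ) (t : ℝ) =>
      A.indicator (fun _ => (1:ℝ)) t * gaussianPDFReal 0 1 (t - zw.1) * zw.2) := by
    show Measurable (fun x : (ℝ × ℝ) × ℝ =>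
      A.indicator (fun _ => (1:ℝ)) x.2 * gaussianPDFReal 0 1 (x.2 - x.1.1) * x.1.2)
    exact (((measurable_one.indicator hA).comp measurable_snd).mul
        ((measurable_gaussianPDFReal 0 1).comp (measurable_snd.sub measurable_fst.fst))).mul
      measurable_fst.snd
  have hswapint : Integrable (Function.uncurry fun (zw : ℝ × ℝ) (t : ℝ) =>
      A.indicator (fun _ => (1:ℝ)) t * gaussianPDFReal 0 1 (t - zw.1) * zw.2) (ρ.prod volume) := by
    refine (big_int hw).norm.mono' hum.aestronglyMeasurable (ae_of_all _ fun x => ?_)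
    show ‖A.indicator (fun _ => (1:ℝ)) x.2 * gaussianPDFReal 0 1 (x.2 - x.1.1) * x.1.2‖ ≤ _
    rw [norm_mul, norm_mul]
    have h1 : ‖A.indicator (fun _ => (1:ℝ)) x.2‖ ≤ 1 := by
      by_cases hx : x.2 ∈ A <;> simp [Set.indicator_apply, hx]
    calc ‖A.indicator (fun _ => (1:ℝ)) x.2‖ * ‖gaussianPDFReal 0 1 (x.2 - x.1.1)‖ * ‖x.1.2‖
        ≤ 1 * ‖gaussianPDFReal 0 1 (x.2 - x.1.1)‖ * ‖x.1.2‖ := by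
          apply mul_le_mul_of_nonneg_right (mul_le_mul_of_nonneg_right h1 (norm_nonneg _))
            (norm_nonneg _)
      _ = ‖gaussianPDFReal 0 1 (x.2 - x.1.1) * x.1.2‖ := by rw [one_mul, norm_mul]
  rw [integral_integral_swap hswapint]
  rw [← integral_indicator hA]
  congr 1
  funext t
  have : ∀ zw : ℝ × ℝ, A.indicator (fun _ => (1:ℝ)) t * gaussianPDFReal 0 1 (t - zw.1) * zw.2
      = A.indicator (fun _ => (1:ℝ)) t * (gaussianPDFReal 0 1 (t - zw.1) * zw.2) := by
    intro zw; ring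
  simp_rw [this]
  rw [integral_const_mul]
  rw [hqdef]
  by_cases ht : t ∈ A <;> simp [Set.indicator_apply, ht]

/-- Lemma 4.1 / `lem:conditional`. Let `d = 1`, let `Z` be
`𝒢`-measurable and `ΔZ ∈ L¹(𝒢; ℝ)`. Then for `γ₁`-a.e. `ζ`,
`E[ΔZ | Z + Γ = ζ] = E[φ₁(ζ − Z) ΔZ] / E[φ₁(ζ − Z)]`. -/
theorem statement16
    {Ω : Type*} [MeasurableSpace Ω] {P : Measure Ω} [IsProbabilityMeasure P]
    (X Γ : Ω → ℝ) (hX : Measurable X) (hΓ : Measurable Γ)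
    (hlawΓ : P.map Γ = gaussianReal 0 1)
    (hindep : IndepFun X Γ P)
    (Z dZ : Ω → ℝ)
    (hZ : Measurable[sigmaGen X] Z)
    (hdZ : Measurable[sigmaGen X] dZ) (hdZint : Integrable dZ P)
    -- `h` is a factorization of the conditional expectation `E[ΔZ | Z + Γ]` through `Z + Γ`
    (h : ℝ → ℝ) (hh : Measurable h)
    (hfact : P[dZ|sigmaGen (fun ω => Z ω + Γ ω)] =ᵐ[P] fun ω => h (Z ω + Γ ω)) :
    ∀ᵐ ζ ∂(gaussianReal 0 1),
      h ζ = (∫ ω, gaussianPDFReal 0 1 (ζ - Z ω) * dZ ω ∂P) /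
        (∫ ω, gaussianPDFReal 0 1 (ζ - Z ω) ∂P) := by
  have hZm : Measurable Z := hZ.mono hX.comap_le le_rfl
  have hdZm : Measurable dZ := hdZ.mono hX.comap_le le_rfl
  set V : Ω → ℝ × ℝ := fun ω => (Z ω, dZ ω) with hVdef
  have hVm : Measurable V := hZm.prodMk hdZm
  set S : Ω → ℝ := fun ω => Z ω + Γ ω with hSdef
  have hSm : Measurable S := hZm.add hΓ
  set ρ : Measure (ℝ × ℝ) := P.map V with hρdef
  haveI : IsProbabilityMeasure ρ := Measure.isProbabilityMeasure_map hVm.aemeasurable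
  have hw : Integrable (fun zw : ℝ × ℝ => zw.2) ρ := by
    rw [hρdef, integrable_map_measure measurable_snd.aestronglyMeasurable hVm.aemeasurable]
    exact hdZint
  have h_law : P.map (fun ω => (V ω, Γ ω)) = ρ.prod (gaussianReal 0 1) := by
    have hle : MeasurableSpace.comap V inferInstance ≤ MeasurableSpace.comap X inferInstance :=
      (hZ.prodMk hdZ).comap_le
    have hind : IndepFun V Γ P := indep_of_indep_of_le_left hindep hle
    rw [(indepFun_iff_map_prod_eq_prod_map_map hVm.aemeasurable hΓ.aemeasurable).mp hind, hlawΓ]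
  set p : ℝ → ℝ := fun ζ => ∫ zw : ℝ × ℝ, gaussianPDFReal 0 1 (ζ - zw.1) ∂ρ with hpdef
  set q : ℝ → ℝ := fun ζ => ∫ zw : ℝ × ℝ, gaussianPDFReal 0 1 (ζ - zw.1) * zw.2 ∂ρ with hqdef
  have hφ2 : Measurable (fun x : ℝ × (ℝ × ℝ) => gaussianPDFReal 0 1 (x.1 - x.2.1)) :=
    (measurable_gaussianPDFReal 0 1).comp (measurable_fst.sub (measurable_snd.fst))
  have hpm : Measurable p :=
    hφ2.stronglyMeasurable.integral_prod_right'.measurable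
  have hqm : Measurable q :=
    ((hφ2.mul measurable_snd.snd).stronglyMeasurable.integral_prod_right').measurable
  have hppos : ∀ ζ, 0 < p ζ := fun ζ => phi_int_pos ζ
  -- law of S
  have haddm : Measurable (fun x : (ℝ × ℝ) × ℝ => x.1.1 + x.2) :=
    measurable_fst.fst.add measurable_snd
  have hlawS : P.map S = volume.withDensity (fun ζ => ENNReal.ofReal (p ζ)) := by
    have hcomp : S = (fun x : (ℝ × ℝ) × ℝ => x.1.1 + x.2) ∘ (fun ω => (V ω, Γ ω)) := rfl
    rw [hcomp, ← Measure.map_map haddm (hVm.prodMk hΓ), h_law,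
      law_add p hpdef (fun ζ => phi_int ζ)]
  -- conditional expectation facts
  have hm : sigmaGen S ≤ ‹MeasurableSpace Ω› := hSm.comap_le
  have hhS : Integrable (fun ω => h (S ω)) P := (integrable_condExp).congr hfact
  have hhLawS : Integrable h (P.map S) :=
    (integrable_map_measure hh.aestronglyMeasurable hSm.aemeasurable).mpr hhS
  have hhp_int : Integrable (fun ζ => h ζ * p ζ) volume := by
    rw [hlawS, integrable_withDensity_iff hpm.ennreal_ofReal
      (ae_of_all _ fun ζ => ENNReal.ofReal_lt_top)] at hhLawS
    refine hhLawS.congr (ae_of_all _ fun ζ => ?_)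
    simp only [ENNReal.toReal_ofReal (hppos ζ).le]
  have hq_int : Integrable q volume := by
    have := (big_int hw).integral_prod_right
    rw [hqdef]
    exact this
  -- setwise equality
  have hset : ∀ A : Set ℝ, MeasurableSet A →
      ∫ ζ in A, h ζ * p ζ ∂volume = ∫ ζ in A, q ζ ∂volume := by
    intro A hA
    have hL1 : ∫ ζ in A, h ζ * p ζ ∂volume = ∫ ζ in A, h ζ ∂(P.map S) := by
      rw [hlawS]
      have hd : (fun ζ => ENNReal.ofReal (p ζ))
          = fun ζ => ((p ζ).toNNReal : ℝ≥0∞) := rfl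
      rw [hd, setIntegral_withDensity_eq_setIntegral_smul hpm.real_toNNReal _ hA]
      refine setIntegral_congr_fun hA (fun ζ _ => ?_)
      rw [NNReal.smul_def, smul_eq_mul, Real.coe_toNNReal _ (hppos ζ).le, mul_comm]
    have hL2 : ∫ ζ in A, h ζ ∂(P.map S) = ∫ ω in S ⁻¹' A, h (S ω) ∂P :=
      setIntegral_map hA hh.aestronglyMeasurable hSm.aemeasurable
    have hAS : MeasurableSet[sigmaGen S] (S ⁻¹' A) := ⟨A, hA, rfl⟩
    have hL3 : ∫ ω in S ⁻¹' A, h (S ω) ∂P = ∫ ω in S ⁻¹' A, dZ ω ∂P := by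
      have h1 : ∫ ω in S ⁻¹' A, h (S ω) ∂P
          = ∫ ω in S ⁻¹' A, (P[dZ|sigmaGen S]) ω ∂P := by
        refine setIntegral_congr_ae (hSm hA) ?_
        filter_upwards [hfact] with ω hω _
        exact hω.symm
      rw [h1, setIntegral_condExp hm hdZint hAS]
    have hR1 : ∫ ω in S ⁻¹' A, dZ ω ∂P
        = ∫ x : (ℝ × ℝ) × ℝ, A.indicator (fun _ => (1:ℝ)) (x.1.1 + x.2) * x.1.2
            ∂(ρ.prod (gaussianReal 0 1)) := by
      have hGm2 : Measurable (fun x : (ℝ × ℝ) × ℝ =>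
          A.indicator (fun _ => (1:ℝ)) (x.1.1 + x.2) * x.1.2) :=
        ((measurable_one.indicator hA).comp (measurable_fst.fst.add measurable_snd)).mul
          measurable_fst.snd
      rw [← h_law, integral_map (hVm.prodMk hΓ).aemeasurable hGm2.aestronglyMeasurable]
      rw [← integral_indicator (hSm hA)]
      congr 1
      funext ω
      by_cases hω : S ω ∈ A <;>
        (simp only [hVdef, hSdef] at hω ⊢; simp [Set.indicator_apply, hω])
    rw [hL1, hL2, hL3, hR1, rhs_calc hw q hqdef A hA]
  have hae : (fun ζ => h ζ * p ζ) =ᵐ[volume] q :=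
    ae_eq_of_forall_setIntegral_eq_of_sigmaFinite
      (fun s hs _ => hhp_int.integrableOn)
      (fun s hs _ => hq_int.integrableOn)
      (fun s hs _ => hset s hs)
  have hae2 : ∀ᵐ ζ ∂(volume : Measure ℝ), h ζ = q ζ / p ζ := by
    filter_upwards [hae] with ζ hζ
    rw [← hζ, mul_div_assoc, div_self (hppos ζ).ne', mul_one]
  have habs : gaussianReal 0 1 ≪ (volume : Measure ℝ) :=
    gaussianReal_absolutelyContinuous 0 one_ne_zero
  filter_upwards [hae2.filter_mono habs.ae_le] with ζ hζ
  rw [hζ, hqdef, hpdef]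
  have hfm1 : Measurable (fun zw : ℝ × ℝ => gaussianPDFReal 0 1 (ζ - zw.1) * zw.2) :=
    ((measurable_gaussianPDFReal 0 1).comp (measurable_const.sub measurable_fst)).mul
      measurable_snd
  have hfm2 : Measurable (fun zw : ℝ × ℝ => gaussianPDFReal 0 1 (ζ - zw.1)) :=
    (measurable_gaussianPDFReal 0 1).comp (measurable_const.sub measurable_fst)
  congr 1
  · exact integral_map hVm.aemeasurable hfm1.aestronglyMeasurable
  · exact integral_map hVm.aemeasurable hfm2.aestronglyMeasurable

end
end

section
/- Let d = 1, let ΔZ ∈ L²(𝒢;ℝ) with E[ΔZ] = 0, and let R > 0. Then there exists ε = ε(R) ∈ (0,1) such that for every Z ∈ L²(𝒢;ℝ) with |Z| ≤ R almost surely, one has ‖E[ΔZ | Z + Γ]‖²_{L²} ≤ (1 − ε) ‖ΔZ‖²_{L²}. -/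
open MeasureTheory ProbabilityTheory Filter Set
open scoped ENNReal InnerProductSpace Topology

noncomputable section

section Statement18Aux

open Real

local notation "φ" => gaussianPDFReal 0 1

lemma st18_phi_eq (m x : ℝ) : gaussianPDFReal m 1 x = φ (x - m) := by
  simp [gaussianPDFReal]

lemma st18_phi_pos (x : ℝ) : 0 < φ x := gaussianPDFReal_pos 0 1 x one_ne_zero

lemma st18_phi_anti {x y : ℝ} (h : x ^ 2 ≤ y ^ 2) : φ y ≤ φ x := by
  unfold gaussianPDFReal
  simp only [sub_zero, NNReal.coe_one, mul_one]
  exact mul_le_mul_of_nonneg_left (Real.exp_le_exp.mpr (by linarith)) (by positivity)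

lemma st18_phi_lt {x y : ℝ} (h : x ^ 2 < y ^ 2) : φ y < φ x := by
  unfold gaussianPDFReal
  simp only [sub_zero, NNReal.coe_one, mul_one]
  refine mul_lt_mul_of_pos_left (Real.exp_lt_exp.mpr (by linarith)) ?_
  have : (0:ℝ) < π := Real.pi_pos
  positivity

lemma st18_phi_le (x : ℝ) : φ x ≤ φ 0 := st18_phi_anti (by simpa using sq_nonneg x)

/-- Weighted Cauchy-Schwarz. -/
lemma st18_cs {α : Type*} [MeasurableSpace α] (μ : Measure α) (a u : α → ℝ)
    (hu : 0 ≤ᵐ[μ] u) (h1 : Integrable u μ) (h2 : Integrable (fun x => a x * u x) μ)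
    (h3 : Integrable (fun x => a x ^ 2 * u x) μ) :
    (∫ x, a x * u x ∂μ) ^ 2 ≤ (∫ x, a x ^ 2 * u x ∂μ) * ∫ x, u x ∂μ := by
  have key : ∀ t : ℝ, 0 ≤ (∫ x, u x ∂μ) * (t * t) + (2 * ∫ x, a x * u x ∂μ) * t
      + ∫ x, a x ^ 2 * u x ∂μ := by
    intro t
    have h0 : 0 ≤ ∫ x, (t + a x) ^ 2 * u x ∂μ :=
      integral_nonneg_of_ae (hu.mono fun x hx => mul_nonneg (sq_nonneg _) hx)
    have he : ∀ x, (t + a x) ^ 2 * u x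
        = t * t * u x + (2 * t) * (a x * u x) + a x ^ 2 * u x := by intro x; ring
    rw [integral_congr_ae (Filter.Eventually.of_forall he)] at h0
    rw [integral_add (f := fun x => t * t * u x + (2 * t) * (a x * u x))
        (g := fun x => a x ^ 2 * u x) ((h1.const_mul _).add (h2.const_mul _)) h3,
      integral_add (f := fun x => t * t * u x) (g := fun x => (2 * t) * (a x * u x))
        (h1.const_mul _) (h2.const_mul _), integral_const_mul, integral_const_mul] at h0
    nlinarith [h0]
  have hd := discrim_le_zero key
  rw [discrim] at hd
  nlinarith [hd]

lemma st18_phi_int : Integrable (fun x : ℝ => φ x) volume := integrable_gaussianPDFReal 0 1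

lemma st18_shift_int (c : ℝ) : Integrable (fun x : ℝ => φ (x - c)) volume :=
  (integrable_gaussianPDFReal c 1).congr
    (Filter.Eventually.of_forall fun x => (st18_phi_eq c x))

lemma st18_shift_integral (c : ℝ) : ∫ x : ℝ, φ (x - c) = 1 := by
  rw [integral_congr_ae (Filter.Eventually.of_forall fun x => (st18_phi_eq c x).symm)]
  exact integral_gaussianPDFReal_eq_one c one_ne_zero

/-- Joint integrability on the product. -/
lemma st18_prodInt (μ : Measure (ℝ × ℝ)) [IsProbabilityMeasure μ] {a : ℝ × ℝ → ℝ}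
    (ham : Measurable a) (hai : Integrable a μ) :
    Integrable (fun y : (ℝ × ℝ) × ℝ => a y.1 * φ (y.2 - y.1.1)) (μ.prod volume) := by
  have hmeas : AEStronglyMeasurable (fun y : (ℝ × ℝ) × ℝ => a y.1 * φ (y.2 - y.1.1))
      (μ.prod volume) :=
    ((ham.comp measurable_fst).mul ((measurable_gaussianPDFReal 0 1).comp
      (measurable_snd.sub measurable_fst.fst))).aestronglyMeasurable
  refine (integrable_prod_iff hmeas).2 ⟨Filter.Eventually.of_forall fun w => ?_, ?_⟩
  · exact ((st18_shift_int w.1).const_mul (a w))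
  · have he : (fun w : ℝ × ℝ => ∫ x, ‖a w * φ (x - w.1)‖ ∂volume) = fun w => ‖a w‖ := by
      funext w
      have : ∀ x : ℝ, ‖a w * φ (x - w.1)‖ = ‖a w‖ * φ (x - w.1) := fun x => by
        rw [norm_mul, Real.norm_of_nonneg (gaussianPDFReal_nonneg 0 1 _)]
      rw [integral_congr_ae (Filter.Eventually.of_forall this), integral_const_mul,
        st18_shift_integral, mul_one]
    rw [he]
    exact hai.norm

/-- Marginal integrability and total integral. -/
lemma st18_marginal (μ : Measure (ℝ × ℝ)) [IsProbabilityMeasure μ] {a : ℝ × ℝ → ℝ}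
    (ham : Measurable a) (hai : Integrable a μ) :
    Integrable (fun x => ∫ w, a w * φ (x - w.1) ∂μ) volume ∧
      ∫ x, (∫ w, a w * φ (x - w.1) ∂μ) ∂volume = ∫ w, a w ∂μ := by
  have H := st18_prodInt μ ham hai
  constructor
  · exact H.swap.integral_prod_left
  · rw [integral_integral_swap (f := fun (x : ℝ) (w : ℝ × ℝ) => a w * φ (x - w.1)) H.swap]
    refine Eq.trans (integral_congr_ae (Filter.Eventually.of_forall fun w => ?_)) rfl
    show (∫ x, a w * φ (x - w.1) ∂volume) = a w
    rw [integral_const_mul, st18_shift_integral, mul_one]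

/-- Change of variables for integrals against a shifted Gaussian. -/
lemma st18_gaussShift (c : ℝ) (k : ℝ → ℝ) (hk : AEStronglyMeasurable k volume) :
    ∫ γ, k (c + γ) ∂(gaussianReal 0 1) = ∫ x, φ (x - c) * k x ∂volume := by
  have hac : (gaussianReal c 1) ≪ volume := by
    rw [gaussianReal_of_var_ne_zero _ one_ne_zero]
    exact withDensity_absolutelyContinuous _ _
  have h1 : ∫ γ, k (c + γ) ∂(gaussianReal 0 1) = ∫ x, k x ∂((gaussianReal 0 1).map (c + ·)) := by
    rw [integral_map (measurable_const_add c).aemeasurable]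
    rw [gaussianReal_map_const_add, zero_add]
    exact hk.mono_ac hac
  rw [h1, gaussianReal_map_const_add, zero_add,
    gaussianReal_of_var_ne_zero _ one_ne_zero]
  have hd : volume.withDensity (gaussianPDF c 1)
      = volume.withDensity (fun x => (((gaussianPDFReal c 1 x).toNNReal : NNReal) : ℝ≥0∞)) := rfl
  rw [hd, integral_withDensity_eq_integral_smul
    ((measurable_gaussianPDFReal c 1).real_toNNReal) k]
  refine integral_congr_ae (Filter.Eventually.of_forall fun x => ?_)
  show (gaussianPDFReal c 1 x).toNNReal • k x = φ (x - c) * k x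
  rw [NNReal.smul_def, smul_eq_mul, Real.coe_toNNReal _ (gaussianPDFReal_nonneg c 1 x),
    st18_phi_eq]

/-- Law of `w.1.1 + w.2` under `μ ⊗ gaussianReal 0 1`. -/
lemma st18_map_add_prod (μ : Measure (ℝ × ℝ)) [IsProbabilityMeasure μ] :
    (μ.prod (gaussianReal 0 1)).map (fun y : (ℝ × ℝ) × ℝ => y.1.1 + y.2)
      = volume.withDensity (fun x => ENNReal.ofReal (∫ w, φ (x - w.1) ∂μ)) := by
  have hadd : Measurable (fun y : (ℝ × ℝ) × ℝ => y.1.1 + y.2) :=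
    measurable_fst.fst.add measurable_snd
  have hφint : ∀ x : ℝ, Integrable (fun w : ℝ × ℝ => φ (x - w.1)) μ := fun x => by
    refine (integrable_const (φ 0)).mono'
      (((measurable_gaussianPDFReal 0 1).comp ((measurable_const.sub measurable_fst))).aestronglyMeasurable)
      (Filter.Eventually.of_forall fun w => ?_)
    rw [Real.norm_of_nonneg (gaussianPDFReal_nonneg 0 1 _)]
    exact st18_phi_le _
  ext t ht
  rw [Measure.map_apply hadd ht, withDensity_apply _ ht, Measure.prod_apply (hadd ht)]
  have h1 : ∀ w : ℝ × ℝ, (gaussianReal 0 1)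
      (Prod.mk w ⁻¹' ((fun y : (ℝ × ℝ) × ℝ => y.1.1 + y.2) ⁻¹' t))
      = ∫⁻ x in t, ENNReal.ofReal (φ (x - w.1)) := by
    intro w
    have hset : Prod.mk w ⁻¹' ((fun y : (ℝ × ℝ) × ℝ => y.1.1 + y.2) ⁻¹' t)
        = (fun γ => w.1 + γ) ⁻¹' t := rfl
    rw [hset, ← Measure.map_apply (measurable_const_add w.1) ht, gaussianReal_map_const_add,
      zero_add, gaussianReal_of_var_ne_zero _ one_ne_zero, withDensity_apply _ ht]
    refine lintegral_congr fun x => ?_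
    rw [gaussianPDF, st18_phi_eq]
  rw [lintegral_congr h1]
  rw [lintegral_lintegral_swap (f := fun (w : ℝ × ℝ) (x : ℝ) => ENNReal.ofReal (φ (x - w.1)))
    (((measurable_gaussianPDFReal 0 1).comp
      (measurable_snd.sub measurable_fst.fst)).ennreal_ofReal.aemeasurable)]
  refine lintegral_congr fun x => ?_
  rw [← ofReal_integral_eq_lintegral_ofReal (hφint x)
    (Filter.Eventually.of_forall fun w => gaussianPDFReal_nonneg 0 1 _)]

/-- Set-integral identity for the second coordinate against a slice. -/
lemma st18_slice (μ : Measure (ℝ × ℝ)) [IsProbabilityMeasure μ]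
    (hsnd : Integrable (fun w : ℝ × ℝ => w.2) μ) {t : Set ℝ} (ht : MeasurableSet t) :
    ∫ y in {y : (ℝ × ℝ) × ℝ | y.1.1 + y.2 ∈ t}, y.1.2 ∂(μ.prod (gaussianReal 0 1))
      = ∫ x in t, (∫ w, w.2 * φ (x - w.1) ∂μ) ∂volume := by
  have hadd : Measurable (fun y : (ℝ × ℝ) × ℝ => y.1.1 + y.2) :=
    measurable_fst.fst.add measurable_snd
  have hU : MeasurableSet {y : (ℝ × ℝ) × ℝ | y.1.1 + y.2 ∈ t} := hadd ht
  rw [← integral_indicator hU]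
  have hb : Integrable (fun y : (ℝ × ℝ) × ℝ => y.1.2) (μ.prod (gaussianReal 0 1)) := by
    refine (integrable_prod_iff
      (measurable_fst.snd.aestronglyMeasurable)).2
      ⟨Filter.Eventually.of_forall fun w =>
        (integrable_const w.2 : Integrable (fun _ : ℝ => w.2) (gaussianReal 0 1)), ?_⟩
    simp only [integral_const, measure_univ, probReal_univ, ENNReal.toReal_one, smul_eq_mul, one_mul]
    exact hsnd.norm
  have hInd : Integrable ({y : (ℝ × ℝ) × ℝ | y.1.1 + y.2 ∈ t}.indicator
      (fun y : (ℝ × ℝ) × ℝ => y.1.2)) (μ.prod (gaussianReal 0 1)) := hb.indicator hU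
  rw [integral_prod _ hInd]
  have inner : ∀ w : ℝ × ℝ,
      (∫ γ, {y : (ℝ × ℝ) × ℝ | y.1.1 + y.2 ∈ t}.indicator
        (fun y : (ℝ × ℝ) × ℝ => y.1.2) (w, γ) ∂(gaussianReal 0 1))
      = ∫ x in t, w.2 * φ (x - w.1) ∂volume := by
    intro w
    have he : ∀ γ : ℝ, ({y : (ℝ × ℝ) × ℝ | y.1.1 + y.2 ∈ t}.indicator
        (fun y : (ℝ × ℝ) × ℝ => y.1.2)) (w, γ) = (t.indicator (fun _ => w.2)) (w.1 + γ) := by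
      intro γ
      by_cases h : w.1 + γ ∈ t <;> simp [Set.indicator_apply, h]
    rw [integral_congr_ae (Filter.Eventually.of_forall he),
      st18_gaussShift w.1 _ ((stronglyMeasurable_const.indicator ht).aestronglyMeasurable)]
    have he2 : (fun x => φ (x - w.1) * t.indicator (fun _ => w.2) x)
        = t.indicator (fun x => w.2 * φ (x - w.1)) := by
      funext x
      by_cases h : x ∈ t <;> simp [h, mul_comm]
    rw [he2, integral_indicator ht]
  rw [integral_congr_ae (Filter.Eventually.of_forall inner)]
  have H : Integrable (Function.uncurry fun (w : ℝ × ℝ) (x : ℝ) => w.2 * φ (x - w.1))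
      (μ.prod (volume.restrict t)) := by
    have h2 : μ.prod (volume.restrict t) = (μ.prod volume).restrict (Set.univ ×ˢ t) := by
      rw [← Measure.prod_restrict, Measure.restrict_univ]
    rw [h2]
    exact (st18_prodInt μ measurable_snd hsnd).restrict
  exact integral_integral_swap H

end Statement18Aux

local notation "φ" => gaussianPDFReal 0 1

/-- Lemma 4.4 / `lem:reverse_ineq`. Let `d = 1`, `ΔZ ∈ L²(𝒢; ℝ)` with
`E[ΔZ] = 0` and `R > 0`. Then there is `ε = ε(R) ∈ (0,1)` such that for every `Z ∈ L²(𝒢; ℝ)`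
with `|Z| ≤ R` a.s. one has `‖E[ΔZ | Z + Γ]‖²_{L²} ≤ (1 − ε) ‖ΔZ‖²_{L²}`. -/
theorem statement18
    {Ω : Type*} [mΩ : MeasurableSpace Ω] {P : Measure Ω} [IsProbabilityMeasure P]
    (Γ : Ω → ℝ) (hΓ : Measurable Γ) (hlawΓ : P.map Γ = gaussianReal 0 1)
    (mG : MeasurableSpace Ω) (hmG : mG ≤ mΩ)
    (hindep : Indep (sigmaGen Γ) mG P)
    (dZ : Ω → ℝ) (hdZ : MemL2Meas P mG dZ) (hmean : (∫ ω, dZ ω ∂P) = 0)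
    (R : ℝ) (hR : 0 < R) :
    ∃ ε ∈ Set.Ioo (0:ℝ) 1, ∀ Z : Ω → ℝ, MemL2Meas P mG Z → (∀ᵐ ω ∂P, |Z ω| ≤ R) →
      (∫ ω, (P[dZ|sigmaGen (fun ω' => Z ω' + Γ ω')]) ω ^ 2 ∂P) ≤
        (1 - ε) * ∫ ω, dZ ω ^ 2 ∂P := by
  classical
  letI : MeasurableSpace Ω := mΩ
  -- the uniform gap
  set mR : ℝ → ℝ := fun x => φ (|x| + R) with hmR_def
  have hmR_meas : Measurable mR :=
    (measurable_gaussianPDFReal 0 1).comp (measurable_abs.add_const R)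
  have hmR_le : ∀ x, mR x ≤ φ x := fun x =>
    st18_phi_anti (by nlinarith [abs_nonneg x, sq_abs x, hR.le])
  have hmR_lt : ∀ x, mR x < φ x := fun x =>
    st18_phi_lt (by nlinarith [abs_nonneg x, sq_abs x, hR])
  have hmR_int : Integrable mR volume := by
    refine st18_phi_int.mono' hmR_meas.aestronglyMeasurable
      (Filter.Eventually.of_forall fun x => ?_)
    rw [Real.norm_of_nonneg (gaussianPDFReal_nonneg 0 1 _)]
    exact hmR_le x
  set ε : ℝ := ∫ x, mR x ∂volume with hε_def
  have hε_pos : 0 < ε := by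
    rw [hε_def]
    refine (integral_pos_iff_support_of_nonneg
      (fun x => (st18_phi_pos _).le) hmR_int).2 ?_
    have hsupp : Function.support mR = Set.univ :=
      Set.eq_univ_of_forall fun x => (st18_phi_pos _).ne'
    rw [hsupp]
    simp
  have hε_lt : ε < 1 := by
    have h1 : 0 < ∫ x, (φ x - mR x) ∂volume := by
      refine (integral_pos_iff_support_of_nonneg
        (fun x => sub_nonneg.2 (hmR_le x)) (st18_phi_int.sub hmR_int)).2 ?_
      have hsupp : Function.support (fun x => φ x - mR x) = Set.univ :=
        Set.eq_univ_of_forall fun x => (sub_pos.2 (hmR_lt x)).ne'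
      rw [hsupp]
      simp
    rw [integral_sub st18_phi_int hmR_int, integral_gaussianPDFReal_eq_one 0 one_ne_zero] at h1
    rw [hε_def]
    linarith
  refine ⟨ε, ⟨hε_pos, hε_lt⟩, ?_⟩
  intro Z hZ hZR
  -- measurability setup
  have hdZm : Measurable dZ := hdZ.1.mono hmG le_rfl
  have hZm : Measurable Z := hZ.1.mono hmG le_rfl
  set X : Ω → ℝ := fun ω => Z ω + Γ ω with hX_def
  have hXm : Measurable X := hZm.add hΓ
  set W : Ω → ℝ × ℝ := fun ω => (Z ω, dZ ω) with hW_def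
  have hWm : Measurable W := hZm.prodMk hdZm
  have hWmG : Measurable[mG] W := hZ.1.prodMk hdZ.1
  set μW : Measure (ℝ × ℝ) := P.map W with hμW_def
  haveI : IsProbabilityMeasure μW := Measure.isProbabilityMeasure_map hWm.aemeasurable
  -- independence and joint law
  have hIndep : IndepFun W Γ P := by
    rw [IndepFun_iff_Indep]
    exact indep_of_indep_of_le_left hindep.symm (measurable_iff_comap_le.mp hWmG)
  have hpair : P.map (fun ω => (W ω, Γ ω)) = μW.prod (gaussianReal 0 1) := by
    rw [hμW_def, ← hlawΓ]
    exact (indepFun_iff_map_prod_eq_prod_map_map hWm.aemeasurable hΓ.aemeasurable).1 hIndep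
  -- facts about μW
  have hdZint : Integrable dZ P := hdZ.2.integrable one_le_two
  have haeR : ∀ᵐ w ∂μW, |w.1| ≤ R := by
    rw [hμW_def]
    exact (ae_map_iff hWm.aemeasurable
      (measurableSet_le (measurable_fst.abs) measurable_const)).2 hZR
  have hsnd_int : Integrable (fun w : ℝ × ℝ => w.2) μW :=
    (integrable_map_measure measurable_snd.aestronglyMeasurable hWm.aemeasurable).2 hdZint
  have hsnd0 : ∫ w, (w.2 : ℝ) ∂μW = 0 := by
    rw [hμW_def, integral_map hWm.aemeasurable measurable_snd.aestronglyMeasurable]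
    exact hmean
  have hsq_int : Integrable (fun w : ℝ × ℝ => w.2 ^ 2) μW :=
    (integrable_map_measure ((measurable_snd.pow_const 2).aestronglyMeasurable)
      hWm.aemeasurable).2 hdZ.2.integrable_sq
  have hsq_eq : ∫ w, (w.2 : ℝ) ^ 2 ∂μW = ∫ ω, dZ ω ^ 2 ∂P := by
    rw [hμW_def, integral_map hWm.aemeasurable ((measurable_snd.pow_const 2).aestronglyMeasurable)]
  have hdZsq_nonneg : 0 ≤ ∫ ω, dZ ω ^ 2 ∂P := integral_nonneg fun ω => sq_nonneg _
  -- the density and the conditional expectation candidate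
  set p : ℝ → ℝ := fun x => ∫ w, φ (x - w.1) ∂μW with hp_def
  set g : ℝ → ℝ := fun x => ∫ w, w.2 * φ (x - w.1) ∂μW with hg_def
  set q : ℝ → ℝ := fun x => g x / p x with hq_def
  have hpm : Measurable p := by
    have := (StronglyMeasurable.integral_prod_right'
      (f := fun z : ℝ × (ℝ × ℝ) => φ (z.1 - z.2.1)) (ν := μW)
      ((measurable_gaussianPDFReal 0 1).comp
        (measurable_fst.sub measurable_snd.fst)).stronglyMeasurable)
    exact this.measurable
  have hgm : Measurable g := by
    have := (StronglyMeasurable.integral_prod_right'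
      (f := fun z : ℝ × (ℝ × ℝ) => z.2.2 * φ (z.1 - z.2.1)) (ν := μW)
      ((measurable_snd.snd.mul ((measurable_gaussianPDFReal 0 1).comp
        (measurable_fst.sub measurable_snd.fst)))).stronglyMeasurable)
    exact this.measurable
  have hqm : Measurable q := hgm.div hpm
  have hφint : ∀ x : ℝ, Integrable (fun w : ℝ × ℝ => φ (x - w.1)) μW := fun x => by
    refine (integrable_const (φ 0)).mono'
      (((measurable_gaussianPDFReal 0 1).comp
        ((measurable_const.sub measurable_fst))).aestronglyMeasurable)
      (Filter.Eventually.of_forall fun w => ?_)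
    rw [Real.norm_of_nonneg (gaussianPDFReal_nonneg 0 1 _)]
    exact st18_phi_le _
  have hφ_ae_lb : ∀ x : ℝ, ∀ᵐ w ∂μW, mR x ≤ φ (x - w.1) := by
    intro x
    refine haeR.mono fun w hw => st18_phi_anti ?_
    have h1 : |x - w.1| ≤ |x| + R := (abs_sub x w.1).trans (by linarith)
    calc (x - w.1) ^ 2 = |x - w.1| ^ 2 := (sq_abs _).symm
      _ ≤ (|x| + R) ^ 2 := by
          refine pow_le_pow_left₀ (abs_nonneg _) h1 2
  have hp_lb : ∀ x, mR x ≤ p x := fun x => by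
    have h0 : ∫ (_ : ℝ × ℝ), mR x ∂μW = mR x := by simp
    rw [hp_def, ← h0]
    exact integral_mono_ae (integrable_const _) (hφint x) (hφ_ae_lb x)
  have hp_pos : ∀ x, 0 < p x := fun x => lt_of_lt_of_le (st18_phi_pos _) (hp_lb x)
  -- law of X
  have hlawX : P.map X = volume.withDensity (fun x => ENNReal.ofReal (p x)) := by
    have hXcomp : X = (fun y : (ℝ × ℝ) × ℝ => y.1.1 + y.2) ∘ (fun ω => (W ω, Γ ω)) := rfl
    rw [hXcomp, ← Measure.map_map (g := fun y : (ℝ × ℝ) × ℝ => y.1.1 + y.2) (measurable_fst.fst.add measurable_snd) (hWm.prodMk hΓ),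
      hpair, st18_map_add_prod]
  -- conditional expectation identification
  have hmle : sigmaGen X ≤ mΩ := measurable_iff_comap_le.mp hXm
  haveI hsf : SigmaFinite (P.trim hmle) := by infer_instance
  have hqXsm : AEStronglyMeasurable[sigmaGen X] (fun ω => q (X ω)) P :=
    ⟨fun ω => q (X ω), (hqm.comp (Measurable.of_comap_le le_rfl)).stronglyMeasurable,
      Filter.EventuallyEq.rfl⟩
  have hgInt : Integrable g volume := (st18_marginal μW measurable_snd hsnd_int).1
  have hqXint : Integrable (fun ω => q (X ω)) P := by
    have h1 : Integrable q (P.map X) := by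
      rw [hlawX, integrable_withDensity_iff hpm.ennreal_ofReal
        (Filter.Eventually.of_forall fun x => ENNReal.ofReal_lt_top)]
      refine hgInt.congr (Filter.Eventually.of_forall fun x => ?_)
      show g x = q x * (ENNReal.ofReal (p x)).toReal
      rw [ENNReal.toReal_ofReal (hp_pos x).le]
      simp only [hq_def]
      rw [div_mul_cancel₀ _ (hp_pos x).ne']
    exact (integrable_map_measure hqm.aestronglyMeasurable hXm.aemeasurable).1 h1
  have hsetEq : ∀ s : Set Ω, MeasurableSet[sigmaGen X] s → P s < ⊤ →
      ∫ ω in s, q (X ω) ∂P = ∫ ω in s, dZ ω ∂P := by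
    rintro s ⟨t, ht, rfl⟩ -
    have hL : ∫ ω in X ⁻¹' t, q (X ω) ∂P = ∫ x in t, q x ∂(P.map X) :=
      (setIntegral_map ht hqm.aestronglyMeasurable hXm.aemeasurable).symm
    have hL2 : ∫ x in t, q x ∂(P.map X) = ∫ x in t, g x ∂volume := by
      rw [hlawX, restrict_withDensity ht]
      have hd2 : (volume.restrict t).withDensity (fun x => ENNReal.ofReal (p x))
          = (volume.restrict t).withDensity (fun x => (((p x).toNNReal : NNReal) : ℝ≥0∞)) := rfl
      rw [hd2, integral_withDensity_eq_integral_smul (hpm.real_toNNReal) q]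
      refine integral_congr_ae (Filter.Eventually.of_forall fun x => ?_)
      show (p x).toNNReal • q x = g x
      rw [NNReal.smul_def, smul_eq_mul, Real.coe_toNNReal _ (hp_pos x).le]
      simp only [hq_def]
      rw [mul_comm, div_mul_cancel₀ _ (hp_pos x).ne']
    have hU : MeasurableSet {y : (ℝ × ℝ) × ℝ | y.1.1 + y.2 ∈ t} :=
      (measurable_fst.fst.add measurable_snd) ht
    have hR1 : ∫ ω in X ⁻¹' t, dZ ω ∂P
        = ∫ y in {y : (ℝ × ℝ) × ℝ | y.1.1 + y.2 ∈ t}, y.1.2 ∂(μW.prod (gaussianReal 0 1)) := by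
      rw [← hpair, setIntegral_map hU (measurable_fst.snd.aestronglyMeasurable)
        ((hWm.prodMk hΓ)).aemeasurable]
      rfl
    rw [hL, hL2, hR1, st18_slice μW hsnd_int ht]
  have hcond : (fun ω => q (X ω)) =ᵐ[P] P[dZ | sigmaGen X] :=
    ae_eq_condExp_of_forall_setIntegral_eq hmle hdZint
      (fun s _ _ => hqXint.integrableOn) hsetEq hqXsm
  have hfe : ∫ ω, (P[dZ|sigmaGen X]) ω ^ 2 ∂P = ∫ x, q x ^ 2 * p x ∂volume := by
    have h1 : ∫ ω, (P[dZ|sigmaGen X]) ω ^ 2 ∂P = ∫ ω, q (X ω) ^ 2 ∂P :=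
      integral_congr_ae (hcond.symm.mono fun ω h => by simp only [h])
    have h2 : ∫ ω, q (X ω) ^ 2 ∂P = ∫ x, q x ^ 2 ∂(P.map X) :=
      (integral_map hXm.aemeasurable ((hqm.pow_const 2).aestronglyMeasurable)).symm
    rw [h1, h2, hlawX]
    have hd2 : volume.withDensity (fun x => ENNReal.ofReal (p x))
        = volume.withDensity (fun x => (((p x).toNNReal : NNReal) : ℝ≥0∞)) := rfl
    rw [hd2, integral_withDensity_eq_integral_smul (hpm.real_toNNReal) (fun x => q x ^ 2)]
    refine integral_congr_ae (Filter.Eventually.of_forall fun x => ?_)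
    show (p x).toNNReal • q x ^ 2 = q x ^ 2 * p x
    rw [NNReal.smul_def, smul_eq_mul, Real.coe_toNNReal _ (hp_pos x).le, mul_comm]
  -- the quantitative estimate
  set B : ℝ → ℝ := fun x => ∫ w, w.2 ^ 2 * (φ (x - w.1) - mR x) ∂μW with hB_def
  have hu_int : ∀ x : ℝ, Integrable (fun w : ℝ × ℝ => φ (x - w.1) - mR x) μW :=
    fun x => (hφint x).sub (integrable_const _)
  have hu_nonneg : ∀ x : ℝ, 0 ≤ᵐ[μW] fun w : ℝ × ℝ => φ (x - w.1) - mR x :=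
    fun x => (hφ_ae_lb x).mono fun w hw => sub_nonneg.2 hw
  have hbd : ∀ (x : ℝ) (w : ℝ × ℝ), |φ (x - w.1) - mR x| ≤ φ 0 := by
    intro x w
    rw [abs_le]
    have h1 : mR x ≤ φ 0 := st18_phi_le _
    have h2 : (0:ℝ) ≤ mR x := gaussianPDFReal_nonneg 0 1 _
    constructor
    · linarith [gaussianPDFReal_nonneg 0 1 (x - w.1)]
    · linarith [st18_phi_le (x - w.1)]
  have hau_int : ∀ x : ℝ, Integrable (fun w : ℝ × ℝ => w.2 * (φ (x - w.1) - mR x)) μW := by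
    intro x
    refine (hsnd_int.norm.const_mul (φ 0)).mono'
      ((measurable_snd.mul ((((measurable_gaussianPDFReal 0 1).comp
        (measurable_const.sub measurable_fst)).sub measurable_const))).aestronglyMeasurable)
      (Filter.Eventually.of_forall fun w => ?_)
    rw [norm_mul, mul_comm]
    refine mul_le_mul_of_nonneg_right ?_ (norm_nonneg _)
    rw [Real.norm_eq_abs]
    exact hbd x w
  have ha2u_int : ∀ x : ℝ, Integrable (fun w : ℝ × ℝ => w.2 ^ 2 * (φ (x - w.1) - mR x)) μW := by
    intro x
    refine (hsq_int.norm.const_mul (φ 0)).mono'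
      (((measurable_snd.pow_const 2).mul ((((measurable_gaussianPDFReal 0 1).comp
        (measurable_const.sub measurable_fst)).sub measurable_const))).aestronglyMeasurable)
      (Filter.Eventually.of_forall fun w => ?_)
    rw [norm_mul, mul_comm]
    refine mul_le_mul_of_nonneg_right ?_ (norm_nonneg _)
    rw [Real.norm_eq_abs]
    exact hbd x w
  have hgx : ∀ x : ℝ, g x = ∫ w, w.2 * (φ (x - w.1) - mR x) ∂μW := by
    intro x
    have he : ∀ w : ℝ × ℝ, w.2 * φ (x - w.1) = w.2 * (φ (x - w.1) - mR x) + mR x * w.2 := by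
      intro w; ring
    simp only [hg_def]
    rw [integral_congr_ae (Filter.Eventually.of_forall he),
      integral_add (hau_int x) (hsnd_int.const_mul _), integral_const_mul, hsnd0, mul_zero,
      add_zero]
  have hB_nonneg : ∀ x, 0 ≤ B x := fun x =>
    integral_nonneg_of_ae ((hu_nonneg x).mono fun w hw => mul_nonneg (sq_nonneg _) hw)
  have hpoint : ∀ x, q x ^ 2 * p x ≤ B x := by
    intro x
    have hcs := st18_cs μW (fun w => w.2) (fun w => φ (x - w.1) - mR x)
      (hu_nonneg x) (hu_int x) (hau_int x) (ha2u_int x)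
    have hu_sum : ∫ w, (φ (x - w.1) - mR x) ∂μW = p x - mR x := by
      rw [integral_sub (hφint x) (integrable_const _)]
      simp only [hp_def, integral_const, measure_univ, probReal_univ, ENNReal.toReal_one, smul_eq_mul, one_mul]
    rw [← hgx x, hu_sum] at hcs
    have hqp : q x ^ 2 * p x = g x ^ 2 / p x := by
      simp only [hq_def]
      have hpne : p x ≠ 0 := (hp_pos x).ne'
      field_simp
    rw [hqp]
    have h3 : g x ^ 2 / p x ≤ B x * (p x - mR x) / p x :=
      (div_le_div_iff_of_pos_right (hp_pos x)).mpr hcs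
    refine le_trans h3 ?_
    rw [mul_div_assoc]
    refine mul_le_of_le_one_right (hB_nonneg x) ?_
    refine div_le_one_of_le₀ ?_ (hp_pos x).le
    have : (0:ℝ) ≤ mR x := gaussianPDFReal_nonneg 0 1 _
    linarith
  have hsqφ_int : ∀ x : ℝ, Integrable (fun w : ℝ × ℝ => w.2 ^ 2 * φ (x - w.1)) μW := by
    intro x
    refine ((ha2u_int x).add (hsq_int.const_mul (mR x))).congr
      (Filter.Eventually.of_forall fun w => ?_)
    show w.2 ^ 2 * (φ (x - w.1) - mR x) + mR x * w.2 ^ 2 = w.2 ^ 2 * φ (x - w.1)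
    ring
  have hG2 := st18_marginal μW (measurable_snd.pow_const 2) hsq_int
  have hBsplit : B = fun x => (∫ w, w.2 ^ 2 * φ (x - w.1) ∂μW) - (∫ w, (w.2:ℝ) ^ 2 ∂μW) * mR x := by
    funext x
    simp only [hB_def]
    have he : ∀ w : ℝ × ℝ, w.2 ^ 2 * (φ (x - w.1) - mR x)
        = w.2 ^ 2 * φ (x - w.1) - mR x * w.2 ^ 2 := by intro w; ring
    rw [integral_congr_ae (Filter.Eventually.of_forall he),
      integral_sub (hsqφ_int x) (hsq_int.const_mul _), integral_const_mul]
    ring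
  have hB_int : Integrable B volume := by
    rw [hBsplit]
    exact hG2.1.sub (hmR_int.const_mul _)
  have hB_eq : ∫ x, B x ∂volume = (1 - ε) * ∫ ω, dZ ω ^ 2 ∂P := by
    rw [hBsplit, integral_sub hG2.1 (hmR_int.const_mul _), hG2.2, integral_const_mul,
      ← hε_def, hsq_eq]
    ring
  calc ∫ ω, (P[dZ|sigmaGen X]) ω ^ 2 ∂P = ∫ x, q x ^ 2 * p x ∂volume := hfe
    _ ≤ ∫ x, B x ∂volume := integral_mono_of_nonneg
        (Filter.Eventually.of_forall fun x => mul_nonneg (sq_nonneg _) (hp_pos x).le) hB_int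
        (Filter.Eventually.of_forall hpoint)
    _ = (1 - ε) * ∫ ω, dZ ω ^ 2 ∂P := hB_eq


end
end
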